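/- Let G and H be topological groups, π : H → G a surjective continuous open group homomorphism with discrete kernel L (a covering homomorphism). Then a continuous group-homomorphic section s : G → H of π exists if and only if the covering π is trivial, i.e., the identity component of H meets L only in the identity element. In particular, if some nontrivial element of L is connected to the identity of H by a path, no continuous splitting exists. -/

import Mathlib

/-- Splitting criterion for covering homomorphisms of topological groups: a
continuous surjective open homomorphism `π : H → G` with discrete kernel (onto a
path-connected `G`, with `H` locally path-connected) admits a continuous
homomorphic section if and only if no nontrivial element of the kernel lies in
the path component of the identity of `H`. -/
theorem stmt_17 {H G : Type*}
    [TopologicalSpace H] [Group H] [IsTopologicalGroup H] [LocallyPathConnectedSpace H]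
    [TopologicalSpace G] [Group G] [IsTopologicalGroup G] [PathConnectedSpace G]
    [LocallyPathConnectedSpace G]
    (π : H →* G) (hcont : Continuous π) (hsurj : Function.Surjective π)
    (hopen : IsOpenMap π) (hdisc : DiscreteTopology π.ker) :
    (∃ s : G →* H, Continuous s ∧ π.comp s = MonoidHom.id G) ↔
      ∀ h : H, h ∈ π.ker → h ∈ pathComponent (1 : H) → h = 1 := by
  constructor
  · rintro ⟨s, hscont, hsid⟩ h hker hpath
    have hπs : ∀ g : G, π (s g) = g := fun g => DFunLike.congr_fun hsid g
    obtain ⟨γ⟩ := hpath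
    have hmem : ∀ t : unitInterval, γ t * (s (π (γ t)))⁻¹ ∈ π.ker := by
      intro t
      simp [MonoidHom.mem_ker, hπs]
    set f : unitInterval → π.ker := fun t => ⟨γ t * (s (π (γ t)))⁻¹, hmem t⟩ with hf
    have hfc : Continuous f := by
      apply Continuous.subtype_mk
      exact γ.continuous.mul ((hscont.comp (hcont.comp γ.continuous)).inv)
    have hsub : (Set.range f).Subsingleton :=
      (isPreconnected_range hfc).subsingleton
    have h01 : f 0 = f 1 := hsub ⟨0, rfl⟩ ⟨1, rfl⟩
    have h0 : (f 0 : H) = 1 := by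
      simp [hf, γ.source]
    have h1 : (f 1 : H) = h := by
      have : π h = 1 := hker
      simp [hf, γ.target, this]
    rw [← h1, ← h01, h0]
  · intro hker
    -- the path component of 1 as a subgroup
    let P : Subgroup H :=
      { carrier := pathComponent (1 : H)
        one_mem' := mem_pathComponent_self 1
        mul_mem' := fun {a b} ha hb =>
          ⟨(ha.somePath.mul hb.somePath).cast (one_mul (1 : H)).symm rfl⟩
        inv_mem' := fun {a} ha =>
          ⟨(ha.somePath.map continuous_inv).cast inv_one.symm rfl⟩ }
    have hPopen : IsOpen (P : Set H) := by
      show IsOpen (pathComponent (1 : H))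
      rw [← pathComponentIn_univ]
      exact isOpen_univ.pathComponentIn _
    -- π restricted to P is injective
    have hinj : Function.Injective (fun p : P => π p) := by
      intro a b hab
      have hmem : (a : H) * (b : H)⁻¹ ∈ π.ker := by
        simp only [MonoidHom.mem_ker, map_mul, map_inv]
        simp only at hab
        rw [hab, mul_inv_cancel]
      have hP : (a : H) * (b : H)⁻¹ ∈ P := P.mul_mem a.2 (P.inv_mem b.2)
      have := hker _ hmem hP
      have : (a : H) = b := by
        have := mul_inv_eq_one.mp this
        exact this
      exact Subtype.ext this
    -- π restricted to P is surjective: its image is a clopen subgroup of connected G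
    have hsurjP : Function.Surjective (fun p : P => π p) := by
      let K : Subgroup G := P.map π
      have hKopen : IsOpen (K : Set G) := by
        have : (K : Set G) = π '' (P : Set H) := Subgroup.coe_map π P
        rw [this]
        exact hopen _ hPopen
      have hKclosed : IsClosed (K : Set G) := K.isClosed_of_isOpen hKopen
      have hKuniv : (K : Set G) = Set.univ :=
        IsClopen.eq_univ ⟨hKclosed, hKopen⟩ ⟨1, K.one_mem⟩
      intro g
      have : g ∈ K := by rw [← SetLike.mem_coe, hKuniv]; trivial
      obtain ⟨p, hp, hpg⟩ := this
      exact ⟨⟨p, hp⟩, hpg⟩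
    let e : P ≃ G := Equiv.ofBijective _ ⟨hinj, hsurjP⟩
    have he : ∀ p : P, e p = π p := fun _ => rfl
    have hecont : Continuous e := hcont.comp continuous_subtype_val
    have heopen : IsOpenMap e := hopen.comp hPopen.isOpenMap_subtype_val
    let homeo := Equiv.toHomeomorphOfContinuousOpen e hecont heopen
    refine ⟨{ toFun := fun g => (e.symm g : H)
              map_one' := ?_
              map_mul' := ?_ }, ?_, ?_⟩
    · have h1 : e.symm 1 = (1 : P) := by
        rw [Equiv.symm_apply_eq, he, Subgroup.coe_one, map_one]
      show ((e.symm 1 : P) : H) = 1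
      rw [h1, Subgroup.coe_one]
    · intro x y
      have hm : e.symm (x * y) = e.symm x * e.symm y := by
        rw [Equiv.symm_apply_eq, he, Subgroup.coe_mul, map_mul]
        show x * y = e (e.symm x) * e (e.symm y)
        rw [Equiv.apply_symm_apply, Equiv.apply_symm_apply]
      show ((e.symm (x * y) : P) : H) = (e.symm x : P) * (e.symm y : P)
      rw [hm, Subgroup.coe_mul]
    · exact continuous_subtype_val.comp homeo.symm.continuous
    · ext g
      exact e.apply_symm_apply g
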